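/- Let v̲ ≤ v̄ be reals, let π : [v̲, v̄] → ℝ be non-decreasing and integrable, and let K ∈ ℝ with K ≤ π(v̲). Define p⋆(v) = v·π(v) − v̲·K − ∫_{v̲}^{v} π(s) ds. Then (i) the pair (π, p⋆) is truthful (for all v, v': v·π(v) − p⋆(v) ≥ v·π(v') − p⋆(v')) and individually rational (for all v: v·π(v) − p⋆(v) ≥ v·K); and (ii) if p : [v̲, v̄] → ℝ is any payment rule such that (π, p) is truthful and individually rational, then p(v) ≤ p⋆(v) for every v ∈ [v̲, v̄]. -/

import Mathlib

open MeasureTheory Set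

private lemma intInt_aux {vl vh : ℝ} {π : ℝ → ℝ} (hπ_int : IntegrableOn π (Icc vl vh))
    {a b : ℝ} (hvl : vl ≤ a) (hab : a ≤ b) (hvh : b ≤ vh) :
    IntervalIntegrable π volume a b := by
  rw [intervalIntegrable_iff_integrableOn_Icc_of_le hab]
  exact hπ_int.mono_set (Icc_subset_Icc hvl hvh)

/-- lower bound: (b-a) * π a ≤ ∫ a..b π -/
private lemma int_lb {vl vh : ℝ} {π : ℝ → ℝ} (hπ_mono : MonotoneOn π (Icc vl vh))
    (hπ_int : IntegrableOn π (Icc vl vh))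
    {a b : ℝ} (hvl : vl ≤ a) (hab : a ≤ b) (hvh : b ≤ vh) :
    (b - a) * π a ≤ ∫ s in a..b, π s := by
  have h := intervalIntegral.integral_mono_on (f := fun _ => π a) (g := π) hab
    intervalIntegrable_const (intInt_aux hπ_int hvl hab hvh)
    (fun x hx => hπ_mono ⟨hvl, le_trans hab hvh⟩ ⟨le_trans hvl hx.1, le_trans hx.2 hvh⟩ hx.1)
  simpa [smul_eq_mul] using h

/-- upper bound: ∫ a..b π ≤ (b-a) * π b -/
private lemma int_ub {vl vh : ℝ} {π : ℝ → ℝ} (hπ_mono : MonotoneOn π (Icc vl vh))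
    (hπ_int : IntegrableOn π (Icc vl vh))
    {a b : ℝ} (hvl : vl ≤ a) (hab : a ≤ b) (hvh : b ≤ vh) :
    (∫ s in a..b, π s) ≤ (b - a) * π b := by
  have h := intervalIntegral.integral_mono_on (f := π) (g := fun _ => π b) hab
    (intInt_aux hπ_int hvl hab hvh) intervalIntegrable_const
    (fun x hx => hπ_mono ⟨le_trans hvl hx.1, le_trans hx.2 hvh⟩ ⟨le_trans hvl hab, hvh⟩ hx.2)
  simpa [smul_eq_mul] using h

/-- key truthfulness inequality: (v - v') * π v' ≤ ∫ v'..v π -/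
private lemma key_ineq {vl vh : ℝ} {π : ℝ → ℝ} (hπ_mono : MonotoneOn π (Icc vl vh))
    (hπ_int : IntegrableOn π (Icc vl vh))
    {v v' : ℝ} (hv : v ∈ Icc vl vh) (hv' : v' ∈ Icc vl vh) :
    (v - v') * π v' ≤ ∫ s in v'..v, π s := by
  rcases le_total v' v with h | h
  · exact int_lb hπ_mono hπ_int hv'.1 h hv.2
  · have := int_ub hπ_mono hπ_int hv.1 h hv'.2
    rw [intervalIntegral.integral_symm]
    linarith

theorem stmt_13
    (vl vh : ℝ) (hle : vl ≤ vh) (π : ℝ → ℝ)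
    (hπ_mono : MonotoneOn π (Icc vl vh)) (hπ_int : IntegrableOn π (Icc vl vh))
    (K : ℝ) (hK : K ≤ π vl) :
    (∀ v ∈ Icc vl vh, ∀ v' ∈ Icc vl vh,
      v * π v' - (v' * π v' - vl * K - ∫ s in vl..v', π s) ≤
        v * π v - (v * π v - vl * K - ∫ s in vl..v, π s)) ∧
    (∀ v ∈ Icc vl vh,
      v * K ≤ v * π v - (v * π v - vl * K - ∫ s in vl..v, π s)) ∧
    (∀ p : ℝ → ℝ,
      (∀ v ∈ Icc vl vh, ∀ v' ∈ Icc vl vh, v * π v' - p v' ≤ v * π v - p v) →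
      (∀ v ∈ Icc vl vh, v * K ≤ v * π v - p v) →
      ∀ v ∈ Icc vl vh, p v ≤ v * π v - vl * K - ∫ s in vl..v, π s) := by
  have hvl : vl ∈ Icc vl vh := ⟨le_refl _, hle⟩
  refine ⟨?_, ?_, ?_⟩
  · -- truthfulness
    intro v hv v' hv'
    have hkey := key_ineq hπ_mono hπ_int hv hv'
    have hsub : (∫ s in vl..v, π s) - ∫ s in vl..v', π s = ∫ s in v'..v, π s :=
      intervalIntegral.integral_interval_sub_left
        (intInt_aux hπ_int le_rfl hv.1 hv.2) (intInt_aux hπ_int le_rfl hv'.1 hv'.2)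
    nlinarith [hkey, hsub]
  · -- individual rationality
    intro v hv
    have hkey := key_ineq hπ_mono hπ_int hv hvl
    have hπvl : K ≤ π vl := hK
    have h1 : (v - vl) * K ≤ (v - vl) * π vl :=
      mul_le_mul_of_nonneg_left hK (by linarith [hv.1])
    have h0 : (∫ s in vl..vl, π s) = 0 := intervalIntegral.integral_same
    nlinarith [hkey]
  · -- revenue maximality
    intro p htruth hIR v hv
    set u : ℝ → ℝ := fun t => t * π t - p t with hu
    have hIRvl : vl * K ≤ u vl := hIR vl hvl
    have hstep : ∀ s ∈ Icc vl vh, ∀ t ∈ Icc vl vh, u s + (t - s) * π s ≤ u t := by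
      intro s hs t ht
      have := htruth t ht s hs
      simp only [hu]
      nlinarith [this]
    -- main claim: vl*K + ∫ ≤ u v
    have hmain : (∫ s in vl..v, π s) ≤ u v - u vl := by
      rcases eq_or_lt_of_le hv.1 with heq | hlt
      · subst heq; simp
      -- For each n ≥ 1 use a uniform partition
      set A : ℝ := u v - u vl - ∫ s in vl..v, π s with hA
      have hub : ∀ n : ℕ, 1 ≤ n →
          -((v - vl) * (π v - π vl) / n) ≤ A := by
        intro n hn
        have hn0 : (0:ℝ) < n := by exact_mod_cast hn
        set Δ : ℝ := (v - vl) / n with hΔ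
        have hΔpos : 0 < Δ := div_pos (by linarith) hn0
        set t : ℕ → ℝ := fun i => vl + i * Δ with ht
        have ht0 : t 0 = vl := by simp [ht]
        have htn : t n = v := by
          simp only [ht, hΔ]
          field_simp
          ring
        have htmono : ∀ i, t i ≤ t (i + 1) := by
          intro i
          simp only [ht]
          push_cast
          nlinarith [hΔpos.le]
        have htmem : ∀ i ≤ n, t i ∈ Icc vl vh := by
          intro i hi
          constructor
          · simp only [ht]
            have := mul_nonneg (Nat.cast_nonneg i : (0:ℝ) ≤ i) hΔpos.le
            linarith
          · have : t i ≤ t n := by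
              have hmono : Monotone t := monotone_nat_of_le_succ htmono
              exact hmono hi
            rw [htn] at this
            exact le_trans this hv.2
        -- decompose
        have hint_piece : ∀ i < n, IntervalIntegrable π volume (t i) (t (i+1)) := by
          intro i hi
          exact intInt_aux hπ_int (htmem i (le_of_lt hi)).1 (htmono i) (htmem (i+1) hi).2
        have hsum_int : ∑ i ∈ Finset.range n, (∫ s in (t i)..(t (i+1)), π s)
            = ∫ s in vl..v, π s := by
          rw [intervalIntegral.sum_integral_adjacent_intervals hint_piece, ht0, htn]
        have hsum_u : ∑ i ∈ Finset.range n, (u (t (i+1)) - u (t i)) = u v - u vl := by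
          have h := Finset.sum_range_sub (fun i => u (t i)) n
          rw [h, htn, ht0]
        have hterm : ∀ i ∈ Finset.range n,
            Δ * π (t i) - Δ * π (t (i+1)) ≤
              (u (t (i+1)) - u (t i)) - ∫ s in (t i)..(t (i+1)), π s := by
          intro i hi
          rw [Finset.mem_range] at hi
          have hmi := htmem i (le_of_lt hi)
          have hmi1 := htmem (i+1) hi
          have h1 := hstep (t i) hmi (t (i+1)) hmi1
          have h2 := int_ub hπ_mono hπ_int hmi.1 (htmono i) hmi1.2
          have hdiff : t (i+1) - t i = Δ := by
            simp only [ht]; push_cast; ring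
          rw [hdiff] at h1 h2
          linarith
        have hsum := Finset.sum_le_sum hterm
        have hRHS : ∑ i ∈ Finset.range n,
            ((u (t (i+1)) - u (t i)) - ∫ s in (t i)..(t (i+1)), π s)
            = (u v - u vl) - ∫ s in vl..v, π s := by
          rw [Finset.sum_sub_distrib, hsum_u, hsum_int]
        have hlhs : ∑ i ∈ Finset.range n, (Δ * π (t i) - Δ * π (t (i+1)))
            = Δ * π vl - Δ * π v := by
          have h := Finset.sum_range_sub (fun i => Δ * π (t i)) n
          rw [htn, ht0] at h
          calc ∑ i ∈ Finset.range n, (Δ * π (t i) - Δ * π (t (i+1)))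
              = -∑ i ∈ Finset.range n, (Δ * π (t (i+1)) - Δ * π (t i)) := by
                rw [← Finset.sum_neg_distrib]
                apply Finset.sum_congr rfl
                intros; ring
            _ = -(Δ * π v - Δ * π vl) := by rw [h]
            _ = Δ * π vl - Δ * π v := by ring
        rw [hRHS, hlhs] at hsum
        have heq : -((v - vl) * (π v - π vl) / n) = Δ * π vl - Δ * π v := by
          simp only [hΔ]; field_simp; ring
        rw [heq]
        simpa [hA] using hsum
      -- take n → ∞
      have hc : Filter.Tendsto (fun n : ℕ => -((v - vl) * (π v - π vl) / n))
          Filter.atTop (nhds 0) := by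
        have := tendsto_const_div_atTop_nhds_zero_nat ((v - vl) * (π v - π vl))
        simpa using this.neg
      have h0A : (0:ℝ) ≤ A := by
        refine le_of_tendsto hc ?_
        filter_upwards [Filter.eventually_ge_atTop 1] with n hn using hub n hn
      simp only [hA] at h0A
      linarith
    have : vl * K + (∫ s in vl..v, π s) ≤ u v := by linarith
    simp only [hu] at this
    linarith
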